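/- Let t ≥ 0 and k ≥ 1 be integers and F a CNF formula. Let O be a set of pairwise vertex-disjoint subgraphs of inc(F), each a subdivision of the (2t+2)-wall, and let B be a strong W_{≤t}-backdoor set of F with |B| ≤ k. Then at most k members W of O satisfy V(W) ∩ B ≠ ∅; consequently, at least |O| − k members of O are killed externally by some variable of B, i.e., for each such W there is x ∈ B with x ∉ V(W) such that W contains a clause c with x ∈ lit(c) and a clause c' with ¬x ∈ lit(c'). -/

import Mathlib

/-- `twLE G t` means the treewidth of `G` is at most `t`. -/
def twLE {α : Type} (G : SimpleGraph α) (t : ℕ) : Prop :=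
  ∃ (ι : Type) (T : SimpleGraph ι) (bag : ι → Finset α),
    T.IsTree ∧
    (∀ u v : α, G.Adj u v → ∃ i, u ∈ bag i ∧ v ∈ bag i) ∧
    (∀ v : α, (T.induce {i | v ∈ bag i}).Connected) ∧
    (∀ i, (bag i).card ≤ t + 1)

def wallRel (r : ℕ) (p q : ℕ × ℕ) : Prop :=
  1 ≤ p.1 ∧ p.1 ≤ r ∧ 1 ≤ p.2 ∧ p.2 ≤ r ∧
  1 ≤ q.1 ∧ q.1 ≤ r ∧ 1 ≤ q.2 ∧ q.2 ≤ r ∧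
  ((p.2 = q.2 ∧ q.1 = p.1 + 1) ∨ (p.1 = q.1 ∧ q.2 = p.2 + 1 ∧ Even (p.1 + p.2)))

def wallGraph (r : ℕ) : SimpleGraph (ℕ × ℕ) := SimpleGraph.fromRel (wallRel r)

def wallVerts (r : ℕ) : Set (ℕ × ℕ) := {p | 1 ≤ p.1 ∧ p.1 ≤ r ∧ 1 ≤ p.2 ∧ p.2 ≤ r}

/-- The `r`-wall. -/
def Wall (r : ℕ) : SimpleGraph (wallVerts r) := (wallGraph r).induce (wallVerts r)

/-- `W` is (exactly) a subdivision of `H`. -/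
def IsSubdivisionOf {γ β : Type} (W : SimpleGraph γ) (H : SimpleGraph β) : Prop :=
  ∃ (b : β → γ) (p : ∀ u v : β, H.Adj u v → W.Walk (b u) (b v)),
    Function.Injective b ∧
    (∀ (u v : β) (h : H.Adj u v), (p u v h).IsPath) ∧
    (∀ (u v : β) (h : H.Adj u v), p v u h.symm = (p u v h).reverse) ∧
    (∀ (u v : β) (h : H.Adj u v) (x : β), b x ∈ (p u v h).support → x = u ∨ x = v) ∧
    (∀ (u v : β) (h : H.Adj u v) (u' v' : β) (h' : H.Adj u' v'), s(u, v) ≠ s(u', v') →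
      ∀ w : γ, w ∈ (p u v h).support → w ∈ (p u' v' h').support → w = b u ∨ w = b v) ∧
    (∀ w : γ, ∃ (u v : β) (h : H.Adj u v), w ∈ (p u v h).support) ∧
    (∀ e ∈ W.edgeSet, ∃ (u v : β) (h : H.Adj u v), e ∈ (p u v h).edges)

/-- `G` contains `H` as a topological minor. -/
def containsSubdivision {α β : Type} (G : SimpleGraph α) (H : SimpleGraph β) : Prop :=
  ∃ W : G.Subgraph, IsSubdivisionOf W.coe H

noncomputable def nb (t : ℕ) : ℕ := ⌈(16 : ℝ) * ((t : ℝ) + 2) * Real.logb 2 ((t : ℝ) + 2)⌉₊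
noncomputable def sameF (k t : ℕ) : ℕ := 3 * (nb t) ^ 2 * t * 2 ^ (2 * k)
noncomputable def obsF (k t : ℕ) : ℕ := 2 ^ k * sameF k t + k
noncomputable def wallF (k t : ℕ) : ℕ := (2 * t + 2) * (1 + ⌈Real.sqrt (obsF k t)⌉₊)

structure CNF (V : Type) where
  ι : Type
  cls : Finset ι
  lit : ι → Finset (V × Bool)
  ok : ∀ i ∈ cls, ∀ v : V, ¬((v, true) ∈ lit i ∧ (v, false) ∈ lit i)

def CNF.vars {V : Type} [DecidableEq V] (F : CNF V) : Finset V :=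
  F.cls.biUnion (fun i => (F.lit i).image Prod.fst)

def CNF.reduce {V : Type} [DecidableEq V] (F : CNF V) (X : Finset V) (τ : V → Bool) : CNF V where
  ι := F.ι
  cls := F.cls.filter (fun i => ∀ l ∈ F.lit i, l.1 ∈ X → τ l.1 ≠ l.2)
  lit := fun i => (F.lit i).filter (fun l => l.1 ∉ X)
  ok := by
    intro i hi v hv
    exact F.ok i (Finset.mem_of_mem_filter i hi) v
      ⟨(Finset.mem_filter.mp hv.1).1, (Finset.mem_filter.mp hv.2).1⟩

def CNF.inc {V : Type} (F : CNF V) : SimpleGraph (V ⊕ F.ι) :=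
  SimpleGraph.fromRel (fun a b =>
    match a, b with
    | Sum.inl x, Sum.inr i => i ∈ F.cls ∧ ((x, true) ∈ F.lit i ∨ (x, false) ∈ F.lit i)
    | _, _ => False)

/-- The vertices of `inc F` surviving the application of the partial assignment `τ` on `X`. -/
def CNF.surv {V : Type} (F : CNF V) (X : Finset V) (τ : V → Bool) : Set (V ⊕ F.ι) :=
  {a | match a with
       | Sum.inl x => x ∉ X
       | Sum.inr i => ∀ l ∈ F.lit i, l.1 ∈ X → τ l.1 ≠ l.2}

def CNF.strongBackdoor {V : Type} [DecidableEq V] (F : CNF V) (t : ℕ) (B : Finset V) : Prop :=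
  B ⊆ F.vars ∧ ∀ τ : V → Bool, twLE (F.reduce B τ).inc t

def CNF.delete {V : Type} [DecidableEq V] (F : CNF V) (B : Finset V) : CNF V where
  ι := F.ι
  cls := F.cls
  lit := fun i => (F.lit i).filter (fun l => l.1 ∉ B)
  ok := by
    intro i hi v hv
    exact F.ok i hi v ⟨(Finset.mem_filter.mp hv.1).1, (Finset.mem_filter.mp hv.2).1⟩

noncomputable def CNF.count {V : Type} [DecidableEq V] (F : CNF V) : ℕ :=
  Nat.card {σ : {x // x ∈ F.vars} → Bool //
    ∀ i ∈ F.cls, ∃ l ∈ F.lit i, ∃ h : l.1 ∈ F.vars, σ ⟨l.1, h⟩ = l.2}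

def ValidOT {α κ : Type} (G : SimpleGraph α) (W : G.Subgraph) (Z : Finset α) (t : ℕ)
    (Q : Finset κ) (N : κ → Finset α) (P : Set (Set α)) (R : κ → Set α) : Prop :=
  (∀ A ∈ P, A ⊆ W.verts ∧ (W.induce A).Connected) ∧
  (∀ A ∈ P, ∀ A' ∈ P, A ≠ A' → Disjoint A A') ∧
  (⋃ A ∈ P, A) = W.verts ∧
  (∀ q ∈ Q, R q ∈ P) ∧
  (∀ q ∈ Q, (N q : Set α) ⊆ (Z : Set α)) ∧
  (∀ q ∈ Q, ∀ z ∈ N q, z ∉ R q ∧ ∃ w ∈ R q, G.Adj z w) ∧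
  (∀ q ∈ Q, ∃ z ∈ N q, ∀ q' ∈ Q, q' ≠ q → R q' = R q → z ∉ N q') ∧
  (∀ z ∈ Z, ∃ q ∈ Q, z ∈ N q) ∧
  (∀ q ∈ Q, nb t ≤ (N q).card ∧ (N q).card ≤ 3 * nb t) ∧
  (∀ q ∈ Q, ∀ v ∈ R q, ∀ v' ∈ R q,
    (∃ z ∈ Z, G.Adj v z ∧ z ∉ N q) → (∃ z ∈ Z, G.Adj v' z ∧ z ∉ N q) → v = v')

def HasMinor {α β : Type} (G : SimpleGraph α) (H : SimpleGraph β) : Prop :=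
  ∃ C : β → Set α,
    (∀ u, (C u).Nonempty) ∧
    (∀ u, (G.induce (C u)).Connected) ∧
    (∀ u v, u ≠ v → Disjoint (C u) (C v)) ∧
    (∀ u v, H.Adj u v → ∃ a ∈ C u, ∃ b ∈ C v, G.Adj a b)
namespace Stmt19
open SimpleGraph


variable {ι : Type} {T : SimpleGraph ι}

/-- `S` is closed under paths of `T`. -/
def SClosed (T : SimpleGraph ι) (S : Set ι) : Prop :=
  ∀ x ∈ S, ∀ y ∈ S, ∀ p : T.Walk x y, p.IsPath → ∀ z ∈ p.support, z ∈ S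

lemma walk_eq_of_acyclic (hA : T.IsAcyclic) {x y : ι} (p q : T.Walk x y)
    (hp : p.IsPath) (hq : q.IsPath) : p = q := by
  have := hA.path_unique ⟨p, hp⟩ ⟨q, hq⟩
  exact congrArg Subtype.val this

lemma first_meet {x y : ι} (q : T.Walk x y) : q.IsPath → ∀ S : Set ι, y ∈ S →
    ∃ m, m ∈ S ∧ ∃ q₁ : T.Walk x m, q₁.IsPath ∧ (∀ z ∈ q₁.support, z ∈ q.support) ∧
      (∀ z ∈ q₁.support, z ∈ S → z = m) := by
  induction q with
  | nil =>
    intro _ S hy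
    exact ⟨_, hy, Walk.nil, Walk.IsPath.nil, by simp, by intro z hz _; simpa using hz⟩
  | @cons a w y h p ih =>
    intro hq S hy
    by_cases hx : a ∈ S
    · exact ⟨a, hx, Walk.nil, Walk.IsPath.nil, by simp, by intro z hz _; simpa using hz⟩
    · obtain ⟨m, hm, q₁, hq₁, hsub, hfirst⟩ := ih hq.of_cons S hy
      refine ⟨m, hm, Walk.cons h q₁, ?_, ?_, ?_⟩
      · rw [Walk.cons_isPath_iff]
        refine ⟨hq₁, fun hc => ?_⟩
        have : a ∈ p.support := hsub _ hc
        exact ((Walk.cons_isPath_iff _ _).mp hq).2 this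
      · intro z hz
        rw [Walk.support_cons, List.mem_cons] at hz
        rcases hz with rfl | hz
        · simp
        · exact Walk.support_cons _ _ ▸ List.mem_cons_of_mem _ (hsub _ hz)
      · intro z hz hzS
        rw [Walk.support_cons, List.mem_cons] at hz
        rcases hz with rfl | hz
        · exact absurd hzS hx
        · exact hfirst _ hz hzS

lemma median (hA : T.IsAcyclic) {a b c : ι} (pab : T.Walk a b) (pac : T.Walk a c)
    (pbc : T.Walk b c) (h1 : pab.IsPath) (h2 : pac.IsPath) (h3 : pbc.IsPath) :
    ∃ m, m ∈ pab.support ∧ m ∈ pac.support ∧ m ∈ pbc.support := by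
  classical
  obtain ⟨m, hmS, q₁, hq₁path, hq₁sub, hq₁first⟩ :=
    first_meet pab.reverse h1.reverse {z | z ∈ pac.support}
      (by simp [Walk.start_mem_support] : a ∈ {z | z ∈ pac.support})
  have hmpac : m ∈ pac.support := hmS
  have hq₂path : (pac.dropUntil m hmpac).IsPath := h2.dropUntil hmpac
  have hq₂sub : ∀ z ∈ (pac.dropUntil m hmpac).support, z ∈ pac.support := fun z hz =>
    Walk.support_dropUntil_subset _ _ hz
  have hcomb : (q₁.append (pac.dropUntil m hmpac)).IsPath := by
    rw [Walk.isPath_def, Walk.support_append, List.nodup_append]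
    refine ⟨hq₁path.support_nodup, hq₂path.support_nodup.tail, ?_⟩
    intro z hz1 z' hz2 hzz'
    subst hzz'
    have hz2' : z ∈ (pac.dropUntil m hmpac).support := by
      rw [Walk.support_eq_cons (pac.dropUntil m hmpac)]
      exact List.mem_cons_of_mem _ hz2
    have hzm : z = m := hq₁first _ hz1 (hq₂sub _ hz2')
    rw [hzm] at hz2
    have hnd := hq₂path.support_nodup
    rw [Walk.support_eq_cons (pac.dropUntil m hmpac)] at hnd
    exact (List.nodup_cons.mp hnd).1 hz2
  have heq : q₁.append (pac.dropUntil m hmpac) = pbc :=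
    walk_eq_of_acyclic hA _ _ hcomb h3
  refine ⟨m, ?_, hmpac, ?_⟩
  · have := hq₁sub m (Walk.end_mem_support q₁)
    rwa [Walk.support_reverse, List.mem_reverse] at this
  · rw [← heq, Walk.mem_support_append_iff]
    exact Or.inl (Walk.end_mem_support q₁)

lemma triple_inter (hT : T.IsTree) {S₁ S₂ S₃ : Set ι}
    (c₁ : SClosed T S₁) (c₂ : SClosed T S₂) (c₃ : SClosed T S₃)
    (h12 : (S₁ ∩ S₂).Nonempty) (h13 : (S₁ ∩ S₃).Nonempty) (h23 : (S₂ ∩ S₃).Nonempty) :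
    (S₁ ∩ (S₂ ∩ S₃)).Nonempty := by
  classical
  obtain ⟨c, hc1, hc2⟩ := h12
  obtain ⟨b, hb1, hb3⟩ := h13
  obtain ⟨a, ha2, ha3⟩ := h23
  obtain ⟨wab⟩ := hT.isConnected.preconnected a b
  obtain ⟨wac⟩ := hT.isConnected.preconnected a c
  obtain ⟨wbc⟩ := hT.isConnected.preconnected b c
  obtain ⟨m, hm1, hm2, hm3⟩ := median hT.IsAcyclic wab.bypass wac.bypass wbc.bypass
    wab.bypass_isPath wac.bypass_isPath wbc.bypass_isPath
  refine ⟨m, ?_, ?_, ?_⟩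
  · exact c₁ b hb1 c hc1 wbc.bypass wbc.bypass_isPath m hm3
  · exact c₂ a ha2 c hc2 wac.bypass wac.bypass_isPath m hm2
  · exact c₃ a ha3 b hb3 wab.bypass wab.bypass_isPath m hm1

lemma helly_aux (hT : T.IsTree) (n : ℕ) : ∀ S : Finset (Set ι), S.card ≤ n → S.Nonempty →
    (∀ A ∈ S, SClosed T A) → (∀ A ∈ S, ∀ B ∈ S, (A ∩ B).Nonempty) →
    ∃ d, ∀ A ∈ S, d ∈ A := by
  classical
  induction n with
  | zero =>
    intro S hcard hne _ _
    obtain ⟨A, hA⟩ := hne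
    exact absurd (Finset.card_pos.mpr ⟨A, hA⟩) (by omega)
  | succ n ih =>
    intro S hcard hne hcl hpair
    obtain ⟨A₀, hA₀⟩ := hne
    by_cases hrest : S.erase A₀ = ∅
    · obtain ⟨d, hd, _⟩ := hpair A₀ hA₀ A₀ hA₀
      refine ⟨d, fun A hA => ?_⟩
      have hAeq : A = A₀ := by
        by_contra hne'
        exact (Finset.eq_empty_iff_forall_notMem.mp hrest A) (Finset.mem_erase.mpr ⟨hne', hA⟩)
      exact hAeq ▸ hd
    · have hrne : (S.erase A₀).Nonempty := Finset.nonempty_iff_ne_empty.mpr hrest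
      set S' : Finset (Set ι) := (S.erase A₀).image (fun A => A ∩ A₀) with hS'def
      have hmem : ∀ A ∈ S.erase A₀, A ∈ S := fun A hA => Finset.mem_of_mem_erase hA
      have hcard' : S'.card ≤ n := by
        have h1 : S'.card ≤ (S.erase A₀).card := Finset.card_image_le
        have h2 : (S.erase A₀).card < S.card := Finset.card_erase_lt_of_mem hA₀
        omega
      obtain ⟨d, hd⟩ := ih S' hcard' (hrne.image _)
        (by
          intro A hA
          obtain ⟨B, hB, rfl⟩ := Finset.mem_image.mp hA
          intro x hx y hy p hp z hz
          exact ⟨hcl B (hmem _ hB) x hx.1 y hy.1 p hp z hz,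
            hcl A₀ hA₀ x hx.2 y hy.2 p hp z hz⟩)
        (by
          intro A hA B hB
          obtain ⟨A₁, hA₁, rfl⟩ := Finset.mem_image.mp hA
          obtain ⟨B₁, hB₁, rfl⟩ := Finset.mem_image.mp hB
          have h3 := triple_inter hT (hcl A₁ (hmem _ hA₁)) (hcl B₁ (hmem _ hB₁))
            (hcl A₀ hA₀) (hpair _ (hmem _ hA₁) _ (hmem _ hB₁))
            (hpair _ (hmem _ hA₁) _ hA₀) (hpair _ (hmem _ hB₁) _ hA₀)
          obtain ⟨z, hz1, hz2, hz3⟩ := h3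
          exact ⟨z, ⟨hz1, hz3⟩, ⟨hz2, hz3⟩⟩)
      refine ⟨d, fun A hA => ?_⟩
      by_cases hAeq : A = A₀
      · subst hAeq
        obtain ⟨B, hB⟩ := hrne
        have := hd _ (Finset.mem_image_of_mem _ hB)
        exact this.2
      · exact (hd _ (Finset.mem_image_of_mem _ (Finset.mem_erase.mpr ⟨hAeq, hA⟩))).1

lemma helly (hT : T.IsTree) (S : Finset (Set ι)) (hne : S.Nonempty)
    (hcl : ∀ A ∈ S, SClosed T A)
    (hpair : ∀ A ∈ S, ∀ B ∈ S, (A ∩ B).Nonempty) :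
    ∃ d, ∀ A ∈ S, d ∈ A :=
  helly_aux hT S.card S le_rfl hne hcl hpair

section Decomp

variable {α : Type} {ιT : Type} {T : SimpleGraph ιT}

/-- Transfer a walk along an adjacency-preserving map. -/
lemma walk_transfer {α' β : Type} {G : SimpleGraph α'} {H : SimpleGraph β} (f : α' → β)
    (hf : ∀ a b, G.Adj a b → H.Adj (f a) (f b)) {x y : α'} (p : G.Walk x y) :
    ∃ q : H.Walk (f x) (f y), ∀ z ∈ q.support, ∃ w ∈ p.support, f w = z := by
  induction p with
  | nil => exact ⟨Walk.nil, by simp⟩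
  | @cons a w y h p ih =>
    obtain ⟨q, hq⟩ := ih
    refine ⟨Walk.cons (hf _ _ h) q, ?_⟩
    intro z hz
    rw [Walk.support_cons, List.mem_cons] at hz
    rcases hz with rfl | hz
    · exact ⟨a, by simp, rfl⟩
    · obtain ⟨w', hw', rfl⟩ := hq z hz
      exact ⟨w', by simp [hw'], rfl⟩

/-- In a set inducing a connected subgraph, any two members are joined by a walk
inside the set. -/
lemma exists_walk_in_connected_set {S : Set ιT} (hconn : (T.induce S).Connected)
    {x y : ιT} (hx : x ∈ S) (hy : y ∈ S) :
    ∃ q : T.Walk x y, ∀ z ∈ q.support, z ∈ S := by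
  obtain ⟨w⟩ := hconn.preconnected ⟨x, hx⟩ ⟨y, hy⟩
  obtain ⟨q, hq⟩ := walk_transfer (Subtype.val : S → ιT) (fun a b h => h) w
  refine ⟨q, fun z hz => ?_⟩
  obtain ⟨w', _, rfl⟩ := hq z hz
  exact w'.2

lemma sclosed_of_connected (hT : T.IsTree) {S : Set ιT} (hconn : (T.induce S).Connected) :
    Stmt19.SClosed T S := by
  classical
  intro x hx y hy p hp z hz
  obtain ⟨q, hq⟩ := exists_walk_in_connected_set hconn hx hy
  have heq : p = q.bypass := Stmt19.walk_eq_of_acyclic hT.IsAcyclic p q.bypass hp q.bypass_isPath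
  exact hq z (q.support_bypass_subset (heq ▸ hz))

variable (G : SimpleGraph α)

/-- A step of a walk staying inside `Z`. -/
def stepIn (Z : Set α) (a b : α) : Prop := G.Adj a b ∧ a ∈ Z ∧ b ∈ Z

lemma stepIn_symm {Z : Set α} {a b : α} (h : stepIn G Z a b) : stepIn G Z b a :=
  ⟨h.1.symm, h.2.2, h.2.1⟩

lemma rtg_symm {Z : Set α} {a b : α} (h : Relation.ReflTransGen (stepIn G Z) a b) :
    Relation.ReflTransGen (stepIn G Z) b a := by
  induction h with
  | refl => exact Relation.ReflTransGen.refl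
  | tail _ hstep ih => exact Relation.ReflTransGen.head (stepIn_symm G hstep) ih

/-- Nodes of the tree whose bag meets `A`. -/
def nodesOf (bag : ιT → Finset α) (A : Set α) : Set ιT := {i | ∃ v ∈ A, v ∈ bag i}

lemma sclosed_nodesOf (hT : T.IsTree) (bag : ιT → Finset α)
    (hedge : ∀ u v, G.Adj u v → ∃ i, u ∈ bag i ∧ v ∈ bag i)
    (hvert : ∀ v : α, (T.induce {i | v ∈ bag i}).Connected)
    {A : Set α} (hA : ∀ x ∈ A, ∀ y ∈ A, Relation.ReflTransGen (stepIn G A) x y) :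
    Stmt19.SClosed T (nodesOf bag A) := by
  classical
  intro n₁ hn₁ n₂ hn₂ p hp z hz
  obtain ⟨v₁, hv₁A, hv₁⟩ := hn₁
  obtain ⟨v₂, hv₂A, hv₂⟩ := hn₂
  -- key claim
  have key : ∀ x y : α, Relation.ReflTransGen (stepIn G A) x y → x ∈ A →
      ∀ n ∈ {i | x ∈ bag i}, ∀ n' ∈ {i | y ∈ bag i},
      ∃ q : T.Walk n n', ∀ m ∈ q.support, m ∈ nodesOf bag A := by
    intro x y hxy
    induction hxy with
    | refl =>
      intro hxA n hn n' hn'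
      obtain ⟨q, hq⟩ := exists_walk_in_connected_set (hvert x) hn hn'
      exact ⟨q, fun m hm => ⟨x, hxA, hq m hm⟩⟩
    | @tail b c hab hbc ih =>
      intro hxA n hn n' hn'
      obtain ⟨m, hmb, hmc⟩ := hedge b c hbc.1
      obtain ⟨q₁, hq₁⟩ := ih hxA n hn m hmb
      obtain ⟨q₂, hq₂⟩ := exists_walk_in_connected_set (hvert c) hmc hn'
      refine ⟨q₁.append q₂, fun z' hz' => ?_⟩
      rw [SimpleGraph.Walk.mem_support_append_iff] at hz'
      rcases hz' with hz' | hz'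
      · exact hq₁ _ hz'
      · exact ⟨c, hbc.2.2, hq₂ _ hz'⟩
  obtain ⟨q, hq⟩ := key v₁ v₂ (hA _ hv₁A _ hv₂A) hv₁A n₁ hv₁ n₂ hv₂
  have heq : p = q.bypass := Stmt19.walk_eq_of_acyclic hT.IsAcyclic p q.bypass hp q.bypass_isPath
  exact hq z (q.support_bypass_subset (heq ▸ hz))

/-- Main lemma: a finite family of pairwise touching, internally connected sets is
hit by a single bag of any tree decomposition. -/
theorem bramble_hit {bag : ιT → Finset α} (hT : T.IsTree)
    (hedge : ∀ u v, G.Adj u v → ∃ i, u ∈ bag i ∧ v ∈ bag i)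
    (hvert : ∀ v : α, (T.induce {i | v ∈ bag i}).Connected)
    {κ : Type} (idx : Finset κ) (elem : κ → Set α)
    (hconn : ∀ k ∈ idx, ∀ x ∈ elem k, ∀ y ∈ elem k,
      Relation.ReflTransGen (stepIn G (elem k)) x y)
    (htouch : ∀ k ∈ idx, ∀ k' ∈ idx, (∃ w, w ∈ elem k ∧ w ∈ elem k') ∨
      ∃ x y, x ∈ elem k ∧ y ∈ elem k' ∧ G.Adj x y) :
    ∃ d : ιT, ∀ k ∈ idx, ∃ w ∈ bag d, w ∈ elem k := by
  classical
  rcases idx.eq_empty_or_nonempty with rfl | hne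
  · obtain ⟨i⟩ := hT.isConnected.nonempty
    exact ⟨i, by simp⟩
  have hpairTA : ∀ k ∈ idx, ∀ k' ∈ idx,
      (nodesOf bag (elem k) ∩ nodesOf bag (elem k')).Nonempty := by
    intro k hk k' hk'
    rcases htouch k hk k' hk' with ⟨w, hw1, hw2⟩ | ⟨x, y, hx, hy, hadj⟩
    · have : ∃ i, w ∈ bag i := by
        have := (hvert w).nonempty
        obtain ⟨⟨i, hi⟩⟩ := this
        exact ⟨i, hi⟩
      obtain ⟨i, hi⟩ := this
      exact ⟨i, ⟨w, hw1, hi⟩, ⟨w, hw2, hi⟩⟩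
    · obtain ⟨i, hxi, hyi⟩ := hedge x y hadj
      exact ⟨i, ⟨x, hx, hxi⟩, ⟨y, hy, hyi⟩⟩
  set fam : Finset (Set ιT) := idx.image (fun k => nodesOf bag (elem k)) with hfam
  obtain ⟨d, hd⟩ := Stmt19.helly hT fam (hne.image _)
    (by
      intro A hA
      obtain ⟨k, hk, rfl⟩ := Finset.mem_image.mp hA
      exact sclosed_nodesOf G hT bag hedge hvert (hconn k hk))
    (by
      intro A hA B hB
      obtain ⟨k, hk, rfl⟩ := Finset.mem_image.mp hA
      obtain ⟨k', hk', rfl⟩ := Finset.mem_image.mp hB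
      exact hpairTA k hk k' hk')
  refine ⟨d, fun k hk => ?_⟩
  obtain ⟨v, hvA, hvbag⟩ := hd _ (Finset.mem_image_of_mem _ hk)
  exact ⟨v, hvbag, hvA⟩

end Decomp

section WallSets

/-! Wall-level bramble sets (parameter `t`). The wall has `r = 2t+2` rows and columns.
Rows are `1..2t+2`; all vertical edges are present, horizontal edges `(a,j)-(a,j+1)`
exist iff `a+j` is even. -/

def inE (t : ℕ) : Set (ℕ × ℕ) := {p | (p.1 = 2*t+1 ∨ p.1 = 2*t+2) ∧ 1 ≤ p.2 ∧ p.2 ≤ 2*t+1}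
def inD (t : ℕ) : Set (ℕ × ℕ) := {p | p.2 = 2*t+2 ∧ 1 ≤ p.1 ∧ p.1 ≤ 2*t+2}
def inH (t i : ℕ) : Set (ℕ × ℕ) := {p | (p.1 = 2*i-1 ∨ p.1 = 2*i) ∧ 1 ≤ p.2 ∧ p.2 ≤ 2*t+1}
def inC (t j : ℕ) : Set (ℕ × ℕ) := {p | p.2 = j ∧ 1 ≤ p.1 ∧ p.1 ≤ 2*t}

def elemW (t : ℕ) (k : ℕ × ℕ) : Set (ℕ × ℕ) :=
  if k.1 = 0 then (if k.2 = 0 then inE t else inD t) else inH t k.1 ∪ inC t k.2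

def idxW (t : ℕ) : Finset (ℕ × ℕ) :=
  insert (0,0) (insert (0,1) ((Finset.Ico 1 (t+1)) ×ˢ (Finset.Ico 1 (2*t+2))))

variable {t : ℕ}

lemma adjW_vert {a j : ℕ} (h1 : 1 ≤ a) (h2 : a + 1 ≤ 2*t+2) (hj1 : 1 ≤ j)
    (hj2 : j ≤ 2*t+2) : (wallGraph (2*t+2)).Adj (a, j) (a+1, j) := by
  rw [wallGraph, SimpleGraph.fromRel_adj]
  constructor
  · intro h; injection h with h1 h2; omega
  · left
    refine ⟨h1, by omega, hj1, hj2, by omega, h2, hj1, hj2, Or.inl ⟨rfl, rfl⟩⟩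

lemma adjW_horiz {a j : ℕ} (h1 : 1 ≤ a) (h2 : a ≤ 2*t+2) (hj1 : 1 ≤ j)
    (hj2 : j + 1 ≤ 2*t+2) (hpar : (a + j) % 2 = 0) :
    (wallGraph (2*t+2)).Adj (a, j) (a, j+1) := by
  rw [wallGraph, SimpleGraph.fromRel_adj]
  constructor
  · intro h; injection h with h1 h2; omega
  · left
    exact ⟨h1, h2, hj1, by omega, h1, h2, by omega, hj2,
      Or.inr ⟨rfl, rfl, Nat.even_iff.mpr hpar⟩⟩

lemma col_chain {A : Set (ℕ × ℕ)} {j lo hi : ℕ} (h1 : 1 ≤ lo) (h2 : hi ≤ 2*t+2)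
    (hj1 : 1 ≤ j) (hj2 : j ≤ 2*t+2)
    (hmem : ∀ a, lo ≤ a → a ≤ hi → (a, j) ∈ A) :
    ∀ a b, lo ≤ a → a ≤ b → b ≤ hi →
      Relation.ReflTransGen (stepIn (wallGraph (2*t+2)) A) (a, j) (b, j) := by
  intro a b ha hab hbhi
  induction b, hab using Nat.le_induction with
  | base => exact Relation.ReflTransGen.refl
  | succ b hab ih =>
    refine Relation.ReflTransGen.tail (ih (by omega)) ?_
    exact ⟨adjW_vert (by omega) (by omega) hj1 hj2, hmem b (by omega) (by omega),
      hmem (b+1) (by omega) (by omega)⟩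

lemma row_chain {A : Set (ℕ × ℕ)} {br m : ℕ} (hodd : br % 2 = 1) (hbr : br + 1 ≤ 2*t+2)
    (hm2 : m ≤ 2*t+2)
    (hmem : ∀ a j, (a = br ∨ a = br+1) → 1 ≤ j → j ≤ m → (a, j) ∈ A) :
    ∀ j, 1 ≤ j → j ≤ m → ∀ a, (a = br ∨ a = br+1) →
      Relation.ReflTransGen (stepIn (wallGraph (2*t+2)) A) (a, j) (br, 1) := by
  intro j hj1
  induction j, hj1 using Nat.le_induction with
  | base =>
    intro hm a ha
    have hbrmem : (br, 1) ∈ A := hmem _ _ (Or.inl rfl) (by omega) (by omega)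
    have hbr1mem : (br+1, 1) ∈ A := hmem _ _ (Or.inr rfl) (by omega) (by omega)
    rcases ha with h | h <;> rw [h]
    exact Relation.ReflTransGen.single (stepIn_symm _
      ⟨adjW_vert (by omega) (by omega) (by omega) (by omega), hbrmem, hbr1mem⟩)
  | succ j hj ih =>
    intro hm a ha
    set x : ℕ := if j % 2 = 1 then br else br + 1 with hx
    have hxmem : x = br ∨ x = br + 1 := by
      by_cases h : j % 2 = 1 <;> simp [hx, h]
    have hpar : (x + j) % 2 = 0 := by
      by_cases h : j % 2 = 1 <;> simp [hx, h] <;> omega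
    have hbrmem : (br, j+1) ∈ A := hmem _ _ (Or.inl rfl) (by omega) (by omega)
    have hbr1mem : (br+1, j+1) ∈ A := hmem _ _ (Or.inr rfl) (by omega) (by omega)
    have hadj : (wallGraph (2*t+2)).Adj (br, j+1) (br+1, j+1) :=
      adjW_vert (by omega) (by omega) (by omega) (by omega)
    have hud : ∀ c d : ℕ, (c = br ∨ c = br+1) → (d = br ∨ d = br+1) →
        Relation.ReflTransGen (stepIn (wallGraph (2*t+2)) A) (c, j+1) (d, j+1) := by
      intro c d hc hd
      rcases hc with h1 | h1 <;> rcases hd with h2 | h2 <;> rw [h1, h2]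
      · exact Relation.ReflTransGen.single ⟨hadj, hbrmem, hbr1mem⟩
      · exact Relation.ReflTransGen.single (stepIn_symm _ ⟨hadj, hbrmem, hbr1mem⟩)
    have hx2 : 1 ≤ x ∧ x ≤ 2*t+2 := by rcases hxmem with h | h <;> omega
    have step2 : Relation.ReflTransGen (stepIn (wallGraph (2*t+2)) A) (x, j+1) (x, j) :=
      Relation.ReflTransGen.single (stepIn_symm _
        ⟨adjW_horiz hx2.1 hx2.2 (by omega) (by omega) hpar,
         hmem _ _ hxmem (by omega) (by omega), hmem _ _ hxmem (by omega) (by omega)⟩)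
    exact ((hud a x ha hxmem).trans step2).trans (ih (by omega) x hxmem)

lemma rtg_mono {G : SimpleGraph (ℕ × ℕ)} {A B : Set (ℕ × ℕ)} (hAB : A ⊆ B) {x y : ℕ × ℕ}
    (h : Relation.ReflTransGen (stepIn G A) x y) :
    Relation.ReflTransGen (stepIn G B) x y := by
  induction h with
  | refl => exact Relation.ReflTransGen.refl
  | tail _ hstep ih => exact Relation.ReflTransGen.tail ih ⟨hstep.1, hAB hstep.2.1, hAB hstep.2.2⟩

/-- Internal connectivity of each wall bramble set. -/
lemma wconn_elemW (k : ℕ × ℕ) (hk : k ∈ idxW t) :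
    ∀ x ∈ elemW t k, ∀ y ∈ elemW t k,
      Relation.ReflTransGen (stepIn (wallGraph (2*t+2)) (elemW t k)) x y := by
  have hsymm : ∀ (A : Set (ℕ×ℕ)) (x y : ℕ×ℕ),
      Relation.ReflTransGen (stepIn (wallGraph (2*t+2)) A) x y →
      Relation.ReflTransGen (stepIn (wallGraph (2*t+2)) A) y x := fun A x y h => rtg_symm _ h
  rcases Finset.mem_insert.mp hk with rfl | hk
  · -- E : double row (2t+1, 2t+2), columns 1..2t+1
    intro x hx y hy
    have hE : elemW t (0,0) = inE t := by simp [elemW]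
    rw [hE] at hx hy ⊢
    obtain ⟨hx1, hx2, hx3⟩ := hx
    obtain ⟨hy1, hy2, hy3⟩ := hy
    have hrc := row_chain (t := t) (A := inE t) (br := 2*t+1) (m := 2*t+1) (by omega)
      (by omega) (by omega) (fun a j ha hj1 hj2 => ⟨by omega, hj1, hj2⟩)
    have h1 : Relation.ReflTransGen (stepIn (wallGraph (2*t+2)) (inE t)) x (2*t+1, 1) := by
      have := hrc x.2 hx2 hx3 x.1 (by omega)
      simpa using this
    have h2 := hrc y.2 hy2 hy3 y.1 (by omega)
    exact h1.trans (hsymm _ _ _ (by simpa using h2))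
  rcases Finset.mem_insert.mp hk with rfl | hk
  · -- D : column 2t+2, rows 1..2t+2
    intro x hx y hy
    have hD : elemW t (0,1) = inD t := by simp [elemW]
    rw [hD] at hx hy ⊢
    obtain ⟨hx1, hx2, hx3⟩ := hx
    obtain ⟨hy1, hy2, hy3⟩ := hy
    have hcc := col_chain (t := t) (A := inD t) (j := 2*t+2) (lo := 1) (hi := 2*t+2)
      le_rfl le_rfl (by omega) le_rfl (fun a ha1 ha2 => ⟨rfl, ha1, ha2⟩)
    rcases le_total x.1 y.1 with h | h
    · have := hcc x.1 y.1 hx2 h hy3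
      have hx' : x = (x.1, 2*t+2) := by rw [← hx1]
      have hy' : y = (y.1, 2*t+2) := by rw [← hy1]
      rw [hx', hy']; exact this
    · have := hcc y.1 x.1 hy2 h hx3
      have hx' : x = (x.1, 2*t+2) := by rw [← hx1]
      have hy' : y = (y.1, 2*t+2) := by rw [← hy1]
      rw [hx', hy']; exact hsymm _ _ _ this
  · -- cross X i j
    obtain ⟨hi, hj⟩ := Finset.mem_product.mp hk
    rw [Finset.mem_Ico] at hi hj
    have hi1 : 1 ≤ k.1 := hi.1
    have hX : elemW t k = inH t k.1 ∪ inC t k.2 := by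
      have : k.1 ≠ 0 := by omega
      simp [elemW, this]
    -- anchor : (2*k.1 - 1, k.2) belongs to both parts
    have hanch : (2*k.1 - 1, k.2) ∈ inH t k.1 ∧ (2*k.1 - 1, k.2) ∈ inC t k.2 := by
      constructor
      · exact ⟨Or.inl rfl, by omega, by omega⟩
      · exact ⟨rfl, by omega, by omega⟩
    have hrc := row_chain (t := t) (A := inH t k.1) (br := 2*k.1-1) (m := 2*t+1)
      (by omega) (by omega) (by omega)
      (fun a j ha hj1 hj2 => ⟨by omega, hj1, hj2⟩)
    have hcc := col_chain (t := t) (A := inC t k.2) (j := k.2) (lo := 1) (hi := 2*t)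
      le_rfl (by omega) (by omega) (by omega) (fun a ha1 ha2 => ⟨rfl, ha1, ha2⟩)
    -- every element reaches the anchor inside the union
    have key : ∀ x ∈ inH t k.1 ∪ inC t k.2,
        Relation.ReflTransGen (stepIn (wallGraph (2*t+2)) (inH t k.1 ∪ inC t k.2)) x
          (2*k.1 - 1, k.2) := by
      intro x hx
      rcases hx with hx | hx
      · obtain ⟨hx1, hx2, hx3⟩ := hx
        have h1 : Relation.ReflTransGen (stepIn (wallGraph (2*t+2)) (inH t k.1)) x
            (2*k.1-1, 1) := by
          have := hrc x.2 hx2 hx3 x.1 (by omega)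
          simpa using this
        have h2 : Relation.ReflTransGen (stepIn (wallGraph (2*t+2)) (inH t k.1))
            (2*k.1-1, k.2) (2*k.1-1, 1) := hrc k.2 (by omega) (by omega) _ (Or.inl rfl)
        exact rtg_mono Set.subset_union_left (h1.trans (rtg_symm _ h2))
      · obtain ⟨hx1, hx2, hx3⟩ := hx
        have h1 : Relation.ReflTransGen (stepIn (wallGraph (2*t+2)) (inC t k.2)) x
            (2*k.1-1, k.2) := by
          have hx' : x = (x.1, k.2) := by rw [← hx1]
          rw [hx']
          rcases le_total x.1 (2*k.1-1) with h | h
          · exact hcc x.1 (2*k.1-1) hx2 h (by omega)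
          · exact rtg_symm _ (hcc (2*k.1-1) x.1 (by omega) h hx3)
        exact rtg_mono Set.subset_union_right h1
    intro x hx y hy
    rw [hX] at hx hy ⊢
    exact (key x hx).trans (rtg_symm _ (key y hy))

lemma elemW_E {t : ℕ} : elemW t (0,0) = inE t := by simp [elemW]
lemma elemW_D {t : ℕ} : elemW t (0,1) = inD t := by simp [elemW]
lemma elemW_X {t i j : ℕ} (hi : 1 ≤ i) : elemW t (i,j) = inH t i ∪ inC t j := by
  have : i ≠ 0 := by omega
  simp [elemW, this]

lemma mem_idxW_E {t : ℕ} : (0,0) ∈ idxW t := by simp [idxW]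
lemma mem_idxW_D {t : ℕ} : (0,1) ∈ idxW t := by simp [idxW]
lemma mem_idxW_X {t i j : ℕ} (hi1 : 1 ≤ i) (hi2 : i ≤ t) (hj1 : 1 ≤ j) (hj2 : j ≤ 2*t+1) :
    (i,j) ∈ idxW t := by
  simp only [idxW, Finset.mem_insert, Finset.mem_product, Finset.mem_Ico]
  right; right
  exact ⟨⟨hi1, by omega⟩, ⟨hj1, by omega⟩⟩

lemma mem_idxW_elim {t : ℕ} {k : ℕ × ℕ} (hk : k ∈ idxW t) :
    k = (0,0) ∨ k = (0,1) ∨ (1 ≤ k.1 ∧ k.1 ≤ t ∧ 1 ≤ k.2 ∧ k.2 ≤ 2*t+1) := by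
  simp only [idxW, Finset.mem_insert, Finset.mem_product, Finset.mem_Ico] at hk
  rcases hk with h | h | h
  · exact Or.inl h
  · exact Or.inr (Or.inl h)
  · exact Or.inr (Or.inr ⟨h.1.1, by omega, h.2.1, by omega⟩)

/-- The hitting-set lower bound at wall level: no set of at most `t+1` wall vertices
hits every bramble set. -/
lemma wall_count {t : ℕ} (S : Finset (ℕ × ℕ)) (hS : S.card ≤ t+1)
    (hhit : ∀ k ∈ idxW t, ∃ s ∈ S, s ∈ elemW t k) : False := by
  classical
  obtain ⟨sE, hsES, hsE⟩ := hhit (0,0) mem_idxW_E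
  obtain ⟨sD, hsDS, hsD⟩ := hhit (0,1) mem_idxW_D
  rw [elemW_E] at hsE
  rw [elemW_D] at hsD
  obtain ⟨hsE1, hsE2, hsE3⟩ := hsE
  obtain ⟨hsD1, hsD2, hsD3⟩ := hsD
  have hED : sE ≠ sD := by
    intro h; rw [h] at hsE3; omega
  rcases Nat.eq_zero_or_pos t with rfl | ht
  · have hsub : ({sE, sD} : Finset (ℕ × ℕ)) ⊆ S := by
      intro z hz
      rcases Finset.mem_insert.mp hz with rfl | hz
      · exact hsES
      · rw [Finset.mem_singleton.mp hz]; exact hsDS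
    have h2 : 2 ≤ S.card := by
      rw [← Finset.card_pair hED]
      exact Finset.card_le_card hsub
    omega
  set S' := (S.erase sE).erase sD with hS'
  have hcard' : S'.card ≤ t - 1 := by
    have h1 : sD ∈ S.erase sE := Finset.mem_erase.mpr ⟨fun h => hED h.symm, hsDS⟩
    have h2 := Finset.card_erase_of_mem h1
    have h3 := Finset.card_erase_of_mem hsES
    have h4 : 1 ≤ S.card := Finset.card_pos.mpr ⟨sE, hsES⟩
    rw [hS', h2, h3]
    omega
  have hcross : ∀ i j, 1 ≤ i → i ≤ t → 1 ≤ j → j ≤ 2*t+1 →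
      ∃ s ∈ S', s ∈ inH t i ∪ inC t j := by
    intro i j hi1 hi2 hj1 hj2
    obtain ⟨s, hsS, hs⟩ := hhit (i,j) (mem_idxW_X hi1 hi2 hj1 hj2)
    rw [elemW_X hi1] at hs
    have hrow : s.1 ≤ 2*t := by
      rcases hs with ⟨h,_,_⟩ | ⟨_,_,h⟩ <;> omega
    have hcol : s.2 ≤ 2*t+1 := by
      rcases hs with ⟨_,_,h⟩ | ⟨h,_,_⟩ <;> omega
    refine ⟨s, ?_, hs⟩
    refine Finset.mem_erase.mpr ⟨?_, Finset.mem_erase.mpr ⟨?_, hsS⟩⟩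
    · intro h; rw [h] at hcol; omega
    · intro h; rw [h] at hrow; omega
  have hrowex : ∃ i ∈ Finset.Ico 1 (t+1), i ∉ S'.image (fun s => (s.1+1)/2) := by
    by_contra hcon
    push_neg at hcon
    have hsub : Finset.Ico 1 (t+1) ⊆ S'.image (fun s => (s.1+1)/2) := fun i hi => hcon i hi
    have := Finset.card_le_card hsub
    rw [Nat.card_Ico] at this
    have := le_trans this (le_trans Finset.card_image_le hcard')
    omega
  have hcolex : ∃ j ∈ Finset.Ico 1 (2*t+2), j ∉ S'.image Prod.snd := by
    by_contra hcon
    push_neg at hcon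
    have hsub : Finset.Ico 1 (2*t+2) ⊆ S'.image Prod.snd := fun j hj => hcon j hj
    have := Finset.card_le_card hsub
    rw [Nat.card_Ico] at this
    have := le_trans this (le_trans Finset.card_image_le hcard')
    omega
  obtain ⟨i₀, hi₀mem, hi₀⟩ := hrowex
  obtain ⟨j₀, hj₀mem, hj₀⟩ := hcolex
  rw [Finset.mem_Ico] at hi₀mem hj₀mem
  obtain ⟨s, hsS', hs⟩ := hcross i₀ j₀ hi₀mem.1 (by omega) hj₀mem.1 (by omega)
  rcases hs with ⟨h1, _, _⟩ | ⟨h1, _, _⟩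
  · exact hi₀ (Finset.mem_image.mpr ⟨s, hsS', by omega⟩)
  · exact hj₀ (Finset.mem_image.mpr ⟨s, hsS', h1⟩)

end WallSets

section Spec

/-! Special connector edges of the bramble: each is an ordered pair (designated endpoint
first). -/

def specE (t : ℕ) (a c : ℕ × ℕ) : Prop :=
  (a = (2*t+1, 2*t+1) ∧ c = (2*t+1, 2*t+2)) ∨
  (∃ j, 1 ≤ j ∧ j ≤ 2*t+1 ∧ 1 ≤ t ∧ a = (2*t+1, j) ∧ c = (2*t, j))

def specD (t : ℕ) (a c : ℕ × ℕ) : Prop :=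
  ∃ i, 1 ≤ i ∧ i ≤ t ∧ a = (2*i-1, 2*t+2) ∧ c = (2*i-1, 2*t+1)

def specAll (t : ℕ) (a c : ℕ × ℕ) : Prop := specE t a c ∨ specD t a c

def specOf (t : ℕ) (k : ℕ × ℕ) : ℕ × ℕ → ℕ × ℕ → Prop :=
  if k = (0,0) then specE t else if k = (0,1) then specD t else fun _ _ => False

lemma specOf_sub {t : ℕ} {k : ℕ × ℕ} {a c : ℕ × ℕ} (h : specOf t k a c) : specAll t a c := by
  unfold specOf at h
  split at h
  · exact Or.inl h
  · split at h
    · exact Or.inr h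
    · exact absurd h not_false

lemma mem_wallVerts {t : ℕ} {a : ℕ × ℕ} (h1 : 1 ≤ a.1) (h2 : a.1 ≤ 2*t+2)
    (h3 : 1 ≤ a.2) (h4 : a.2 ≤ 2*t+2) : a ∈ wallVerts (2*t+2) := ⟨h1, h2, h3, h4⟩

lemma adjW_vert' {t a a' j : ℕ} (h1 : 1 ≤ a) (ha' : a' = a + 1) (h2 : a' ≤ 2*t+2)
    (hj1 : 1 ≤ j) (hj2 : j ≤ 2*t+2) : (wallGraph (2*t+2)).Adj (a, j) (a', j) := by
  subst ha'; exact adjW_vert h1 h2 hj1 hj2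

lemma adjW_horiz' {t a j j' : ℕ} (h1 : 1 ≤ a) (h2 : a ≤ 2*t+2) (hj1 : 1 ≤ j)
    (hj' : j' = j + 1) (hj2 : j' ≤ 2*t+2) (hpar : (a + j) % 2 = 0) :
    (wallGraph (2*t+2)).Adj (a, j) (a, j') := by
  subst hj'; exact adjW_horiz h1 h2 hj1 hj2 hpar

lemma specAll_adj {t : ℕ} {a c : ℕ × ℕ} (h : specAll t a c) :
    a ∈ wallVerts (2*t+2) ∧ c ∈ wallVerts (2*t+2) ∧ (wallGraph (2*t+2)).Adj a c := by
  rcases h with (⟨ha, hc⟩ | ⟨j, hj1, hj2, ht, ha, hc⟩) | ⟨i, hi1, hi2, ha, hc⟩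
  · subst ha; subst hc
    exact ⟨mem_wallVerts (by omega) (by omega) (by omega) (by omega),
      mem_wallVerts (by omega) (by omega) (by omega) (by omega),
      adjW_horiz' (by omega) (by omega) (by omega) (by omega) (by omega) (by omega)⟩
  · subst ha; subst hc
    exact ⟨mem_wallVerts (by omega) (by omega) (by omega) (by omega),
      mem_wallVerts (by omega) (by omega) (by omega) (by omega),
      (adjW_vert' (by omega) (by omega) (by omega) (by omega) (by omega)).symm⟩
  · subst ha; subst hc
    exact ⟨mem_wallVerts (by omega) (by omega) (by omega) (by omega),
      mem_wallVerts (by omega) (by omega) (by omega) (by omega),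
      (adjW_horiz' (by omega) (by omega) (by omega) (by omega) (by omega) (by omega)).symm⟩

lemma specE_fst {t : ℕ} {a c : ℕ × ℕ} (h : specE t a c) : a ∈ inE t := by
  rcases h with ⟨ha, _⟩ | ⟨j, hj1, hj2, _, ha, _⟩ <;> subst ha
  · exact ⟨Or.inl rfl, by omega, by omega⟩
  · exact ⟨Or.inl rfl, hj1, hj2⟩

lemma specD_fst {t : ℕ} {a c : ℕ × ℕ} (h : specD t a c) : a ∈ inD t := by
  obtain ⟨i, hi1, hi2, ha, _⟩ := h; subst ha
  exact ⟨rfl, by omega, by omega⟩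

lemma specAll_asymm {t : ℕ} {a c : ℕ × ℕ} (h1 : specAll t a c) (h2 : specAll t c a) :
    False := by
  rcases h1 with (⟨ha, hc⟩ | ⟨j, hj1, hj2, ht, ha, hc⟩) | ⟨i, hi1, hi2, ha, hc⟩ <;>
    rcases h2 with (⟨ha', hc'⟩ | ⟨j', hj1', hj2', ht', ha', hc'⟩) | ⟨i', hi1', hi2', ha', hc'⟩ <;>
      subst ha <;> subst hc <;>
        first
          | (have e1 := congrArg Prod.fst ha'
             have e2 := congrArg Prod.snd ha'
             have e3 := congrArg Prod.fst hc'
             have e4 := congrArg Prod.snd hc'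
             simp only at e1 e2 e3 e4
             omega)

lemma specAll_designated {t : ℕ} {a c a' c' : ℕ × ℕ} (h1 : specAll t a c)
    (h2 : specAll t a' c') (he : (a = a' ∧ c = c') ∨ (a = c' ∧ c = a')) : a = a' := by
  rcases he with ⟨h, _⟩ | ⟨h3, h4⟩
  · exact h
  · exfalso; subst h3; subst h4; exact specAll_asymm h1 h2

end Spec

section Lift

variable {t : ℕ} {β γ : Type} {G' : SimpleGraph β} {Wc : SimpleGraph γ} (ev : γ → β)
  (b : ↥(wallVerts (2*t+2)) → γ)
  (p : ∀ u v : ↥(wallVerts (2*t+2)), (Wall (2*t+2)).Adj u v → Wc.Walk (b u) (b v))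

def supS (u v : ↥(wallVerts (2*t+2))) (h : (Wall (2*t+2)).Adj u v) : Set β :=
  {w | ∃ z ∈ (p u v h).support, ev z = w}

def img (A : Set (ℕ × ℕ)) : Set β :=
  {w | ∃ u v h, (u : ↥(wallVerts (2*t+2))).val ∈ A ∧ v.val ∈ A ∧ w ∈ supS ev b p u v h}

def tailS (spec : ℕ × ℕ → ℕ × ℕ → Prop) : Set β :=
  {w | ∃ u v h, spec (u : ↥(wallVerts (2*t+2))).val v.val ∧ w ∈ supS ev b p u v h ∧
    w ≠ ev (b v)}

def elemG (k : ℕ × ℕ) : Set β := img ev b p (elemW t k) ∪ tailS ev b p (specOf t k)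

lemma elemW_sub {k : ℕ × ℕ} (hk : k ∈ idxW t) : elemW t k ⊆ wallVerts (2*t+2) := by
  rcases mem_idxW_elim hk with rfl | rfl | ⟨h1, h2, h3, h4⟩
  · rw [elemW_E]
    rintro a ⟨ha1 | ha1, ha2, ha3⟩ <;> exact ⟨by omega, by omega, by omega, by omega⟩
  · rw [elemW_D]
    rintro a ⟨ha1, ha2, ha3⟩
    exact ⟨by omega, by omega, by omega, by omega⟩
  · rw [elemW_X h1]
    rintro a (⟨ha1 | ha1, ha2, ha3⟩ | ⟨ha1, ha2, ha3⟩) <;>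
      exact ⟨by omega, by omega, by omega, by omega⟩

lemma specOf_fst {k : ℕ × ℕ} {a c : ℕ × ℕ} (h : specOf t k a c) : a ∈ elemW t k := by
  unfold specOf at h
  split at h
  · next hk => rw [hk, elemW_E]; exact specE_fst h
  · split at h
    · next hk => rw [hk, elemW_D]; exact specD_fst h
    · exact absurd h not_false

lemma walkRTG (hev : ∀ x y, Wc.Adj x y → G'.Adj (ev x) (ev y)) {x y : γ}
    (q : Wc.Walk x y) (Z : Set β) (hZ : ∀ z ∈ q.support, ev z ∈ Z) :
    Relation.ReflTransGen (stepIn G' Z) (ev x) (ev y) := by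
  induction q with
  | nil => exact Relation.ReflTransGen.refl
  | @cons a w y h q ih =>
    refine Relation.ReflTransGen.head ⟨hev _ _ h, hZ a (by simp), hZ w (by simp)⟩ (ih ?_)
    intro z hz
    exact hZ z (by simp [hz])

lemma end_not_mem_takeUntil [DecidableEq γ] {x y : γ} {q : Wc.Walk x y} (hq : q.IsPath)
    {z : γ} (hz : z ∈ q.support) (hne : z ≠ y) : y ∉ (q.takeUntil z hz).support := by
  intro hmem
  have hspec := q.take_spec hz
  have hnd : q.support.Nodup := hq.support_nodup
  rw [← hspec, SimpleGraph.Walk.support_append] at hnd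
  have hy2 : y ∈ (q.dropUntil z hz).support := SimpleGraph.Walk.end_mem_support _
  rw [SimpleGraph.Walk.support_eq_cons (q.dropUntil z hz)] at hy2
  rcases List.mem_cons.mp hy2 with h | h
  · exact hne h.symm
  · exact (List.disjoint_of_nodup_append hnd) hmem h

lemma supS_rtg (hev : ∀ x y, Wc.Adj x y → G'.Adj (ev x) (ev y))
    {u v : ↥(wallVerts (2*t+2))} {h : (Wall (2*t+2)).Adj u v} {w : β}
    (hw : w ∈ supS ev b p u v h) {Z : Set β} (hZ : supS ev b p u v h ⊆ Z) :
    Relation.ReflTransGen (stepIn G' Z) w (ev (b u)) := by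
  classical
  obtain ⟨z, hz, rfl⟩ := hw
  refine rtg_symm G' (walkRTG ev hev ((p u v h).takeUntil z hz) Z ?_)
  intro z' hz'
  exact hZ ⟨z', SimpleGraph.Walk.support_takeUntil_subset _ hz hz', rfl⟩

lemma supS_rtg_tail (hev : ∀ x y, Wc.Adj x y → G'.Adj (ev x) (ev y))
    (hinj : Function.Injective ev)
    {u v : ↥(wallVerts (2*t+2))} {h : (Wall (2*t+2)).Adj u v}
    (hq : (p u v h).IsPath) {w : β}
    (hw : w ∈ supS ev b p u v h) (hwne : w ≠ ev (b v)) {Z : Set β}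
    (hZ : ∀ w' ∈ supS ev b p u v h, w' ≠ ev (b v) → w' ∈ Z) :
    Relation.ReflTransGen (stepIn G' Z) w (ev (b u)) := by
  classical
  obtain ⟨z, hz, rfl⟩ := hw
  have hzbv : z ≠ b v := fun hzz => hwne (by rw [hzz])
  have hnotin := end_not_mem_takeUntil (q := p u v h) hq hz hzbv
  refine rtg_symm G' (walkRTG ev hev ((p u v h).takeUntil z hz) Z ?_)
  intro z' hz'
  refine hZ _ ⟨z', SimpleGraph.Walk.support_takeUntil_subset _ hz hz', rfl⟩ ?_
  intro he
  exact hnotin (by rwa [hinj he] at hz')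

lemma elemG_conn (hev : ∀ x y, Wc.Adj x y → G'.Adj (ev x) (ev y))
    (hinj : Function.Injective ev) {k : ℕ × ℕ} (hk : k ∈ idxW t)
    (hpath : ∀ u v h, (p u v h).IsPath) :
    ∀ x ∈ elemG ev b p k, ∀ y ∈ elemG ev b p k,
      Relation.ReflTransGen (stepIn G' (elemG ev b p k)) x y := by
  classical
  have hsubW : elemW t k ⊆ wallVerts (2*t+2) := elemW_sub hk
  have himg : img ev b p (elemW t k) ⊆ elemG ev b p k := Set.subset_union_left
  have hsupS : ∀ (u v : ↥(wallVerts (2*t+2))) (h : (Wall (2*t+2)).Adj u v),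
      u.val ∈ elemW t k → v.val ∈ elemW t k →
      supS ev b p u v h ⊆ img ev b p (elemW t k) :=
    fun u v h hu hv w hw => ⟨u, v, h, hu, hv, hw⟩
  have hbchain : ∀ x y : ℕ × ℕ,
      Relation.ReflTransGen (stepIn (wallGraph (2*t+2)) (elemW t k)) x y →
      ∀ (hx : x ∈ wallVerts (2*t+2)) (hy : y ∈ wallVerts (2*t+2)),
      Relation.ReflTransGen (stepIn G' (elemG ev b p k)) (ev (b ⟨x, hx⟩)) (ev (b ⟨y, hy⟩)) := by
    intro x y hxy
    induction hxy with
    | refl => intro hx hy; exact Relation.ReflTransGen.refl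
    | @tail y' y hxy' hstep ih =>
      intro hx hy
      have hy' : y' ∈ wallVerts (2*t+2) := hsubW hstep.2.1
      have hadj : (Wall (2*t+2)).Adj ⟨y', hy'⟩ ⟨y, hy⟩ := hstep.1
      refine (ih hx hy').trans ?_
      refine walkRTG ev hev (p ⟨y', hy'⟩ ⟨y, hy⟩ hadj) _ ?_
      intro z hz
      exact himg (hsupS _ _ hadj hstep.2.1 hstep.2.2 ⟨z, hz, rfl⟩)
  have hanchor : ∀ w ∈ elemG ev b p k, ∃ (xc : ℕ × ℕ) (hxc : xc ∈ wallVerts (2*t+2)),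
      xc ∈ elemW t k ∧
      Relation.ReflTransGen (stepIn G' (elemG ev b p k)) w (ev (b ⟨xc, hxc⟩)) := by
    intro w hw
    rcases hw with ⟨u, v, h, hu, hv, hw⟩ | ⟨u, v, h, hspec, hw, hwne⟩
    · exact ⟨u.val, u.2, hu,
        supS_rtg ev b p hev hw (le_trans (hsupS u v h hu hv) himg)⟩
    · refine ⟨u.val, u.2, specOf_fst hspec, ?_⟩
      refine supS_rtg_tail ev b p hev hinj (hpath u v h) hw hwne ?_
      intro w' hw' hwne'
      exact Or.inr ⟨u, v, h, hspec, hw', hwne'⟩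
  intro x hx y hy
  obtain ⟨xc, hxcW, hxcA, hxrtg⟩ := hanchor x hx
  obtain ⟨yc, hycW, hycA, hyrtg⟩ := hanchor y hy
  have hchain := wconn_elemW k hk xc hxcA yc hycA
  exact hxrtg.trans ((hbchain xc yc hchain hxcW hycW).trans (rtg_symm G' hyrtg))

end Lift

section Lift2

variable {t : ℕ} {β γ : Type} {G' : SimpleGraph β} {Wc : SimpleGraph γ} (ev : γ → β)
  (b : ↥(wallVerts (2*t+2)) → γ)
  (p : ∀ u v : ↥(wallVerts (2*t+2)), (Wall (2*t+2)).Adj u v → Wc.Walk (b u) (b v))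

lemma exists_rep (hinj : Function.Injective ev) (hbinj : Function.Injective b)
    (hbr : ∀ u v h (x : ↥(wallVerts (2*t+2))), b x ∈ (p u v h).support → x = u ∨ x = v)
    (hdisj : ∀ u v h u' v' h', s(u, v) ≠ s(u', v') → ∀ z : γ,
      z ∈ (p u v h).support → z ∈ (p u' v' h').support → z = b u ∨ z = b v) :
    ∃ ρ : β → ℕ × ℕ, ∀ k ∈ idxW t, ∀ s ∈ elemG ev b p k, ρ s ∈ elemW t k := by
  classical
  set P1 : β → Prop := fun s => ∃ x, ev (b x) = s with hP1
  set P2 : β → Prop := fun s =>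
    ∃ q : (↥(wallVerts (2*t+2)) × ↥(wallVerts (2*t+2))),
      ∃ h : (Wall (2*t+2)).Adj q.1 q.2,
        specAll t q.1.val q.2.val ∧ s ∈ supS ev b p q.1 q.2 h with hP2
  set P3 : β → Prop := fun s =>
    ∃ q : (↥(wallVerts (2*t+2)) × ↥(wallVerts (2*t+2))),
      ∃ h : (Wall (2*t+2)).Adj q.1 q.2, s ∈ supS ev b p q.1 q.2 h with hP3
  -- two witnesses of the same non-branch vertex lie on the same subdivision path
  have same_edge : ∀ (u v : ↥(wallVerts (2*t+2))) (h) (u' v' : ↥(wallVerts (2*t+2))) (h')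
      (s : β), s ∈ supS ev b p u v h → s ∈ supS ev b p u' v' h' → ¬ P1 s →
      (u = u' ∧ v = v') ∨ (u = v' ∧ v = u') := by
    intro u v h u' v' h' s hsw hsw' hnp1
    have hsym : s(u, v) = s(u', v') := by
      by_contra hne
      obtain ⟨z, hz, hzs⟩ := hsw
      obtain ⟨z', hz', hzs'⟩ := hsw'
      have hzz' : z = z' := hinj (by rw [hzs, hzs'])
      rcases hdisj u v h u' v' h' hne z hz (hzz' ▸ hz') with hzz | hzz
      · exact hnp1 ⟨u, by rw [← hzz, hzs]⟩
      · exact hnp1 ⟨v, by rw [← hzz, hzs]⟩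
    exact Sym2.eq_iff.mp hsym
  refine ⟨fun s =>
    if h1 : P1 s then (h1.choose).val
    else if h2 : P2 s then (h2.choose.1).val
    else if h3 : P3 s then (h3.choose.1).val else (0, 0), ?_⟩
  intro k hk s hs
  by_cases h1 : P1 s
  · simp only [dif_pos h1]
    have hx : ev (b h1.choose) = s := h1.choose_spec
    rcases hs with ⟨u, v, h, hu, hv, hw⟩ | ⟨u, v, h, hspec, hw, hwne⟩
    · obtain ⟨z, hz, hzs⟩ := hw
      have hzx : z = b h1.choose := hinj (by rw [hzs, hx])
      rcases hbr u v h h1.choose (hzx ▸ hz) with hq | hq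
      · rw [hq]; exact hu
      · rw [hq]; exact hv
    · obtain ⟨z, hz, hzs⟩ := hw
      have hzx : z = b h1.choose := hinj (by rw [hzs, hx])
      rcases hbr u v h h1.choose (hzx ▸ hz) with hq | hq
      · rw [hq]; exact specOf_fst hspec
      · exfalso
        apply hwne
        rw [← hzs, hzx, hq]
  by_cases h2 : P2 s
  · simp only [dif_neg h1, dif_pos h2]
    obtain ⟨h₀, hspec₀, hs₀⟩ := h2.choose_spec
    rcases hs with ⟨u, v, h, hu, hv, hw⟩ | ⟨u, v, h, hspec, hw, hwne⟩
    · rcases same_edge _ _ h₀ u v h s hs₀ hw h1 with ⟨he1, _⟩ | ⟨he1, _⟩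
      · rw [he1]; exact hu
      · rw [he1]; exact hv
    · have hcase := same_edge _ _ h₀ u v h s hs₀ hw h1
      have hvals : (h2.choose.1.val = u.val ∧ h2.choose.2.val = v.val) ∨
          (h2.choose.1.val = v.val ∧ h2.choose.2.val = u.val) := by
        rcases hcase with ⟨e1, e2⟩ | ⟨e1, e2⟩
        · exact Or.inl ⟨congrArg Subtype.val e1, congrArg Subtype.val e2⟩
        · exact Or.inr ⟨congrArg Subtype.val e1, congrArg Subtype.val e2⟩
      have : h2.choose.1.val = u.val :=
        specAll_designated hspec₀ (specOf_sub hspec) hvals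
      rw [this]; exact specOf_fst hspec
  by_cases h3 : P3 s
  · simp only [dif_neg h1, dif_neg h2, dif_pos h3]
    obtain ⟨h₁, hs₁⟩ := h3.choose_spec
    rcases hs with ⟨u, v, h, hu, hv, hw⟩ | ⟨u, v, h, hspec, hw, hwne⟩
    · rcases same_edge _ _ h₁ u v h s hs₁ hw h1 with ⟨he1, _⟩ | ⟨he1, _⟩
      · rw [he1]; exact hu
      · rw [he1]; exact hv
    · exact absurd ⟨(u, v), h, specOf_sub hspec, hw⟩ h2
  · exfalso
    rcases hs with ⟨u, v, h, hu, hv, hw⟩ | ⟨u, v, h, hspec, hw, hwne⟩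
    · exact h3 ⟨(u, v), h, hw⟩
    · exact h3 ⟨(u, v), h, hw⟩

lemma bv_mem_img {A : Set (ℕ × ℕ)} {x y : ℕ × ℕ} (hxW : x ∈ wallVerts (2*t+2))
    (hyW : y ∈ wallVerts (2*t+2)) (hx : x ∈ A) (hy : y ∈ A)
    (hadj : (wallGraph (2*t+2)).Adj x y) : ev (b ⟨x, hxW⟩) ∈ img ev b p A := by
  have hadj' : (Wall (2*t+2)).Adj ⟨x, hxW⟩ ⟨y, hyW⟩ := hadj
  exact ⟨⟨x, hxW⟩, ⟨y, hyW⟩, hadj', hx, hy,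
    ⟨b ⟨x, hxW⟩, SimpleGraph.Walk.start_mem_support _, rfl⟩⟩

lemma penult (hbinj : Function.Injective b) (u v : ↥(wallVerts (2*t+2)))
    (h : (Wall (2*t+2)).Adj u v) :
    ∃ z, Wc.Adj z (b v) ∧ z ∈ (p u v h).support ∧ z ≠ b v := by
  have hne : b v ≠ b u := fun he => h.ne (hbinj he).symm
  obtain ⟨z, hadj, q, _⟩ := SimpleGraph.Walk.exists_eq_cons_of_ne hne ((p u v h).reverse)
  refine ⟨z, hadj.symm, ?_, hadj.ne'⟩
  have : z ∈ (p u v h).reverse.support := by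
    rw [‹(p u v h).reverse = _›]
    simp
  rwa [SimpleGraph.Walk.support_reverse, List.mem_reverse] at this

end Lift2

section Lift3

variable {t : ℕ} {β γ : Type} {G' : SimpleGraph β} {Wc : SimpleGraph γ} (ev : γ → β)
  (b : ↥(wallVerts (2*t+2)) → γ)
  (p : ∀ u v : ↥(wallVerts (2*t+2)), (Wall (2*t+2)).Adj u v → Wc.Walk (b u) (b v))

lemma specOf_E : specOf t (0,0) = specE t := by simp [specOf]

lemma specOf_D : specOf t (0,1) = specD t := by
  have h1 : ((0,1) : ℕ × ℕ) ≠ (0,0) := by simp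
  simp [specOf, h1]

lemma elemG_nonempty {k : ℕ × ℕ} (hk : k ∈ idxW t) : ∃ w, w ∈ elemG ev b p k := by
  rcases mem_idxW_elim hk with rfl | rfl | ⟨h1, h2, h3, h4⟩
  · refine ⟨_, Or.inl (bv_mem_img ev b p (x := (2*t+1, 1)) (y := (2*t+2, 1))
      ⟨by omega, by omega, by omega, by omega⟩ ⟨by omega, by omega, by omega, by omega⟩
      ?_ ?_ (adjW_vert' (by omega) (by omega) (by omega) (by omega) (by omega)))⟩
    · rw [elemW_E]; exact ⟨Or.inl rfl, by omega, by omega⟩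
    · rw [elemW_E]; exact ⟨Or.inr rfl, by omega, by omega⟩
  · refine ⟨_, Or.inl (bv_mem_img ev b p (x := (1, 2*t+2)) (y := (2, 2*t+2))
      ⟨by omega, by omega, by omega, by omega⟩ ⟨by omega, by omega, by omega, by omega⟩
      ?_ ?_ (adjW_vert' (by omega) (by omega) (by omega) (by omega) (by omega)))⟩
    · rw [elemW_D]; exact ⟨rfl, by omega, by omega⟩
    · rw [elemW_D]; exact ⟨rfl, by omega, by omega⟩
  · refine ⟨_, Or.inl (bv_mem_img ev b p (x := (2*k.1-1, k.2)) (y := (2*k.1, k.2))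
      ⟨by omega, by omega, by omega, by omega⟩ ⟨by omega, by omega, by omega, by omega⟩
      ?_ ?_ (adjW_vert' (by omega) (by omega) (by omega) (by omega) (by omega)))⟩
    · rw [elemW_X h1]; exact Or.inl ⟨Or.inl rfl, by omega, by omega⟩
    · rw [elemW_X h1]; exact Or.inl ⟨Or.inr rfl, by omega, by omega⟩

/-- Touching via a special connector edge: produces an adjacent pair with the tail
in `elemG k` and a branch vertex in `elemG k'`. -/
lemma spec_touch (hev : ∀ x y, Wc.Adj x y → G'.Adj (ev x) (ev y))
    (hinj : Function.Injective ev) (hbinj : Function.Injective b)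
    {k k' : ℕ × ℕ} {a c n : ℕ × ℕ}
    (haW : a ∈ wallVerts (2*t+2)) (hcW : c ∈ wallVerts (2*t+2))
    (hnW : n ∈ wallVerts (2*t+2))
    (hadj : (wallGraph (2*t+2)).Adj a c)
    (hspec : specOf t k a c)
    (hcA : c ∈ elemW t k') (hnA : n ∈ elemW t k')
    (hcn : (wallGraph (2*t+2)).Adj c n) :
    ∃ x y, x ∈ elemG ev b p k ∧ y ∈ elemG ev b p k' ∧ G'.Adj x y := by
  have h : (Wall (2*t+2)).Adj ⟨a, haW⟩ ⟨c, hcW⟩ := hadj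
  obtain ⟨z, hzadj, hzsup, hzne⟩ := penult b p hbinj ⟨a, haW⟩ ⟨c, hcW⟩ h
  refine ⟨ev z, ev (b ⟨c, hcW⟩), ?_, ?_, hev _ _ hzadj⟩
  · exact Or.inr ⟨⟨a, haW⟩, ⟨c, hcW⟩, h, hspec, ⟨z, hzsup, rfl⟩,
      fun he => hzne (hinj he)⟩
  · exact Or.inl (bv_mem_img ev b p hcW hnW hcA hnA hcn)

lemma elemG_touch (hev : ∀ x y, Wc.Adj x y → G'.Adj (ev x) (ev y))
    (hinj : Function.Injective ev) (hbinj : Function.Injective b) :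
    ∀ k ∈ idxW t, ∀ k' ∈ idxW t,
      (∃ w, w ∈ elemG ev b p k ∧ w ∈ elemG ev b p k') ∨
      (∃ x y, x ∈ elemG ev b p k ∧ y ∈ elemG ev b p k' ∧ G'.Adj x y) := by
  have symm : ∀ k k', ((∃ w, w ∈ elemG ev b p k ∧ w ∈ elemG ev b p k') ∨
      (∃ x y, x ∈ elemG ev b p k ∧ y ∈ elemG ev b p k' ∧ G'.Adj x y)) →
      ((∃ w, w ∈ elemG ev b p k' ∧ w ∈ elemG ev b p k) ∨
      (∃ x y, x ∈ elemG ev b p k' ∧ y ∈ elemG ev b p k ∧ G'.Adj x y)) := by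
    intro k k' hcase
    rcases hcase with ⟨w, hw1, hw2⟩ | ⟨x, y, hx, hy, hxy⟩
    · exact Or.inl ⟨w, hw2, hw1⟩
    · exact Or.inr ⟨y, x, hy, hx, hxy.symm⟩
  -- touching of E with a cross (i,j)
  have hEX : ∀ i j : ℕ, 1 ≤ i → i ≤ t → 1 ≤ j → j ≤ 2*t+1 →
      (∃ x y, x ∈ elemG ev b p (0,0) ∧ y ∈ elemG ev b p (i,j) ∧ G'.Adj x y) := by
    intro i j hi1 hi2 hj1 hj2
    refine spec_touch ev b p hev hinj hbinj (a := (2*t+1, j)) (c := (2*t, j))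
      (n := (2*t-1, j)) ⟨by omega, by omega, by omega, by omega⟩
      ⟨by omega, by omega, by omega, by omega⟩ ⟨by omega, by omega, by omega, by omega⟩
      ((adjW_vert' (by omega) (by omega) (by omega) (by omega) (by omega)).symm)
      ?_ ?_ ?_ ((adjW_vert' (a := 2*t-1) (by omega) (by omega) (by omega) (by omega)
        (by omega)).symm)
    · rw [specOf_E]; exact Or.inr ⟨j, hj1, hj2, by omega, rfl, rfl⟩
    · rw [elemW_X hi1]; exact Or.inr ⟨rfl, by omega, by omega⟩
    · rw [elemW_X hi1]; exact Or.inr ⟨rfl, by omega, by omega⟩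
  -- touching of D with a cross (i,j)
  have hDX : ∀ i j : ℕ, 1 ≤ i → i ≤ t → 1 ≤ j → j ≤ 2*t+1 →
      (∃ x y, x ∈ elemG ev b p (0,1) ∧ y ∈ elemG ev b p (i,j) ∧ G'.Adj x y) := by
    intro i j hi1 hi2 hj1 hj2
    refine spec_touch ev b p hev hinj hbinj (a := (2*i-1, 2*t+2)) (c := (2*i-1, 2*t+1))
      (n := (2*i, 2*t+1)) ⟨by omega, by omega, by omega, by omega⟩
      ⟨by omega, by omega, by omega, by omega⟩ ⟨by omega, by omega, by omega, by omega⟩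
      ((adjW_horiz' (by omega) (by omega) (by omega) (by omega) (by omega) (by omega)).symm)
      ?_ ?_ ?_ (adjW_vert' (by omega) (by omega) (by omega) (by omega) (by omega))
    · rw [specOf_D]; exact ⟨i, hi1, hi2, rfl, rfl⟩
    · rw [elemW_X hi1]; exact Or.inl ⟨Or.inl rfl, by omega, by omega⟩
    · rw [elemW_X hi1]; exact Or.inl ⟨Or.inr (by omega), by omega, by omega⟩
  -- touching of E with D
  have hED : (∃ x y, x ∈ elemG ev b p (0,0) ∧ y ∈ elemG ev b p (0,1) ∧ G'.Adj x y) := by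
    refine spec_touch ev b p hev hinj hbinj (a := (2*t+1, 2*t+1)) (c := (2*t+1, 2*t+2))
      (n := (2*t+2, 2*t+2)) ⟨by omega, by omega, by omega, by omega⟩
      ⟨by omega, by omega, by omega, by omega⟩ ⟨by omega, by omega, by omega, by omega⟩
      (adjW_horiz' (by omega) (by omega) (by omega) (by omega) (by omega) (by omega))
      ?_ ?_ ?_ (adjW_vert' (by omega) (by omega) (by omega) (by omega) (by omega))
    · rw [specOf_E]; exact Or.inl ⟨rfl, rfl⟩
    · rw [elemW_D]; exact ⟨rfl, by omega, by omega⟩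
    · rw [elemW_D]; exact ⟨rfl, by omega, by omega⟩
  -- touching of two crosses
  have hXX : ∀ i j i' j' : ℕ, 1 ≤ i → i ≤ t → 1 ≤ j → j ≤ 2*t+1 →
      1 ≤ i' → i' ≤ t → 1 ≤ j' → j' ≤ 2*t+1 →
      (∃ w, w ∈ elemG ev b p (i,j) ∧ w ∈ elemG ev b p (i',j')) := by
    intro i j i' j' hi1 hi2 hj1 hj2 hi1' hi2' hj1' hj2'
    refine ⟨ev (b ⟨(2*i-1, j'), ⟨by omega, by omega, by omega, by omega⟩⟩), ?_, ?_⟩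
    · refine Or.inl (bv_mem_img ev b p (y := (2*i, j')) _
        ⟨by omega, by omega, by omega, by omega⟩ ?_ ?_
        (adjW_vert' (by omega) (by omega) (by omega) (by omega) (by omega)))
      · rw [elemW_X hi1]; exact Or.inl ⟨Or.inl rfl, by omega, by omega⟩
      · rw [elemW_X hi1]; exact Or.inl ⟨Or.inr (by omega), by omega, by omega⟩
    · refine Or.inl (bv_mem_img ev b p (y := (2*i, j')) _
        ⟨by omega, by omega, by omega, by omega⟩ ?_ ?_
        (adjW_vert' (by omega) (by omega) (by omega) (by omega) (by omega)))
      · rw [elemW_X hi1']; exact Or.inr ⟨rfl, by omega, by omega⟩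
      · rw [elemW_X hi1']; exact Or.inr ⟨rfl, by omega, by omega⟩
  intro k hk k' hk'
  by_cases hkk : k = k'
  · subst hkk
    obtain ⟨w, hw⟩ := elemG_nonempty ev b p hk
    exact Or.inl ⟨w, hw, hw⟩
  rcases mem_idxW_elim hk with rfl | rfl | ⟨h1, h2, h3, h4⟩ <;>
    rcases mem_idxW_elim hk' with h' | h' | h'
  · exact absurd h'.symm hkk
  · rw [h']; exact Or.inr hED
  · rw [show k' = (k'.1, k'.2) from rfl]; exact Or.inr (hEX k'.1 k'.2 h'.1 h'.2.1 h'.2.2.1 h'.2.2.2)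
  · rw [h'] at hkk ⊢
    exact symm _ _ (Or.inr hED)
  · exact absurd h'.symm hkk
  · rw [show k' = (k'.1, k'.2) from rfl]; exact Or.inr (hDX k'.1 k'.2 h'.1 h'.2.1 h'.2.2.1 h'.2.2.2)
  · rw [h']; exact symm _ _ (Or.inr (hEX k.1 k.2 h1 h2 h3 h4))
  · rw [h']; exact symm _ _ (Or.inr (hDX k.1 k.2 h1 h2 h3 h4))
  · rw [show k = (k.1, k.2) from rfl, show k' = (k'.1, k'.2) from rfl]
    exact Or.inl (hXX k.1 k.2 k'.1 k'.2 h1 h2 h3 h4 h'.1 h'.2.1 h'.2.2.1 h'.2.2.2)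

/-- The central contradiction: a graph of treewidth at most `t` cannot contain an
injective image of a subdivision of the `(2t+2)`-wall. -/
theorem no_wall (htw : twLE G' t) (hinj : Function.Injective ev)
    (hev : ∀ x y, Wc.Adj x y → G'.Adj (ev x) (ev y))
    (hsub : IsSubdivisionOf Wc (Wall (2*t+2))) : False := by
  classical
  obtain ⟨b, p, hbinj, hpath, hsymm, hbr, hdisj, hcov, hedg⟩ := hsub
  obtain ⟨ιT, T, bag, hT, hedge, hvert, hbag⟩ := htw
  obtain ⟨d, hd⟩ := bramble_hit G' hT hedge hvert (idxW t) (elemG ev b p)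
    (fun k hk => elemG_conn ev b p hev hinj hk hpath)
    (elemG_touch ev b p hev hinj hbinj)
  obtain ⟨ρ, hρ⟩ := exists_rep ev b p hinj hbinj hbr hdisj
  apply wall_count ((bag d).image ρ) (le_trans Finset.card_image_le (hbag d))
  intro k hk
  obtain ⟨w, hwbag, hwelem⟩ := hd k hk
  exact ⟨ρ w, Finset.mem_image_of_mem ρ hwbag, hρ k hk w hwelem⟩

end Lift3

end Stmt19

/-- Let `O` be a family of pairwise vertex-disjoint subdivisions of the
`(2t+2)`-wall in `inc(F)` and `B` a strong `W_{≤t}`-backdoor set of size at most `k`. Then at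
most `k` members of `O` contain a variable of `B`, and every member containing no variable of
`B` (hence at least `|O| − k` members) is killed externally by some variable of `B`. -/
theorem stmt19 {V : Type} [DecidableEq V] (t k : ℕ) (hk : 1 ≤ k) (F : CNF V)
    {ιO : Type} (Os : Finset ιO) (Wsub : ιO → F.inc.Subgraph)
    (hOdisj : ∀ i ∈ Os, ∀ j ∈ Os, i ≠ j → Disjoint (Wsub i).verts (Wsub j).verts)
    (hOsub : ∀ i ∈ Os, IsSubdivisionOf (Wsub i).coe (Wall (2 * t + 2)))
    (B : Finset V) (hB : F.strongBackdoor t B) (hBk : B.card ≤ k) :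
    (@Finset.filter ιO (fun i => ∃ b ∈ B, Sum.inl b ∈ (Wsub i).verts)
        (fun _ => Classical.propDecidable _) Os).card ≤ k ∧
    ∀ i ∈ Os, (∀ b ∈ B, Sum.inl b ∉ (Wsub i).verts) →
      ∃ x ∈ B, Sum.inl x ∉ (Wsub i).verts ∧
        ∃ c c' : F.ι, Sum.inr c ∈ (Wsub i).verts ∧ Sum.inr c' ∈ (Wsub i).verts ∧
          (x, true) ∈ F.lit c ∧ (x, false) ∈ F.lit c' := by
  classical
  constructor
  · -- at most k members contain a backdoor variable
    rw [Finset.filter_congr_decidable]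
    rcases B.eq_empty_or_nonempty with rfl | ⟨b₀, hb₀⟩
    · have hemp : ∀ i ∈ Os, ¬ ∃ b ∈ (∅ : Finset V), Sum.inl b ∈ (Wsub i).verts := by simp
      rw [Finset.filter_false_of_mem hemp]
      exact le_trans (by simp) hk
    · refine le_trans (Finset.card_le_card_of_injOn
        (fun i => if h : ∃ bb ∈ B, Sum.inl bb ∈ (Wsub i).verts then h.choose else b₀) ?_ ?_) hBk
      · intro i hi
        have hex := (Finset.mem_filter.mp hi).2
        simp only []
        rw [dif_pos hex]
        exact hex.choose_spec.1
      · intro i hi j hj hij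
        have hi' := Finset.mem_filter.mp (Finset.mem_coe.mp hi)
        have hj' := Finset.mem_filter.mp (Finset.mem_coe.mp hj)
        simp only [] at hij
        rw [dif_pos hi'.2, dif_pos hj'.2] at hij
        by_contra hne
        have h1 : Sum.inl (hi'.2.choose) ∈ (Wsub i).verts := hi'.2.choose_spec.2
        have h2 : Sum.inl (hj'.2.choose) ∈ (Wsub j).verts := hj'.2.choose_spec.2
        rw [hij] at h1
        exact Set.disjoint_left.mp (hOdisj i hi'.1 j hj'.1 hne) h1 h2
  · -- every member avoiding B is killed externally
    intro i hi hno
    by_contra hgoal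
    have hkill : ∀ x ∈ B, ¬ ∃ c c' : F.ι, Sum.inr c ∈ (Wsub i).verts ∧
        Sum.inr c' ∈ (Wsub i).verts ∧ (x, true) ∈ F.lit c ∧ (x, false) ∈ F.lit c' := by
      intro x hx hex
      obtain ⟨c, c', h1, h2, h3, h4⟩ := hex
      exact hgoal ⟨x, hx, hno x hx, c, c', h1, h2, h3, h4⟩
    set τ : V → Bool := fun x =>
      if ∃ c : F.ι, Sum.inr c ∈ (Wsub i).verts ∧ (x, false) ∈ F.lit c then true else false
      with hτ
    have hsurv : ∀ c : F.ι, Sum.inr c ∈ (Wsub i).verts →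
        ∀ l ∈ F.lit c, l.1 ∈ B → τ l.1 ≠ l.2 := by
      rintro c hc ⟨x, bo⟩ hl hlB
      cases bo
      · -- literal (x, false) present: τ x = true
        have : τ x = true := by
          rw [hτ]
          simp only []
          rw [if_pos ⟨c, hc, hl⟩]
        simp [this]
      · -- literal (x, true) present: τ x = false
        have : τ x = false := by
          rw [hτ]
          simp only []
          rw [if_neg]
          intro hex
          obtain ⟨c', hc', hl'⟩ := hex
          exact hkill x hlB ⟨c, c', hc, hc', hl, hl'⟩
        simp [this]
    have hadjG : ∀ a b' : V ⊕ F.ι, (Wsub i).Adj a b' → ((F.reduce B τ).inc).Adj a b' := by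
      intro a b' hab
      have hFadj : F.inc.Adj a b' := (Wsub i).adj_sub hab
      have haV : a ∈ (Wsub i).verts := (Wsub i).edge_vert hab
      have hbV : b' ∈ (Wsub i).verts := (Wsub i).edge_vert hab.symm
      rw [CNF.inc, SimpleGraph.fromRel_adj] at hFadj
      refine (SimpleGraph.fromRel_adj _ _ _).mpr ?_
      obtain ⟨hne, hrel⟩ := hFadj
      refine ⟨hne, ?_⟩
      rcases a with x | c <;> rcases b' with x' | c'
      · rcases hrel with h | h <;> exact h.elim
      · -- inl x, inr c'
        have hxB : x ∉ B := fun hxB => hno x hxB haV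
        rcases hrel with h | h
        · left
          refine ⟨(@Finset.mem_filter _ _ (fun _ => Finset.decidableDforallFinset) _ _).mpr ⟨h.1, fun l hl hlB => hsurv c' hbV l hl hlB⟩, ?_⟩
          rcases h.2 with h2 | h2
          · exact Or.inl (Finset.mem_filter.mpr ⟨h2, hxB⟩)
          · exact Or.inr (Finset.mem_filter.mpr ⟨h2, hxB⟩)
        · exact h.elim
      · -- inr c, inl x'
        have hxB : x' ∉ B := fun hxB => hno x' hxB hbV
        rcases hrel with h | h
        · exact h.elim
        · right
          refine ⟨(@Finset.mem_filter _ _ (fun _ => Finset.decidableDforallFinset) _ _).mpr ⟨h.1, fun l hl hlB => hsurv c haV l hl hlB⟩, ?_⟩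
          rcases h.2 with h2 | h2
          · exact Or.inl (Finset.mem_filter.mpr ⟨h2, hxB⟩)
          · exact Or.inr (Finset.mem_filter.mpr ⟨h2, hxB⟩)
      · rcases hrel with h | h <;> exact h.elim
    exact Stmt19.no_wall (G' := (F.reduce B τ).inc) (Wc := (Wsub i).coe)
      (ev := (Subtype.val : ↥(Wsub i).verts → V ⊕ F.ι)) (hB.2 τ) Subtype.val_injective
      (fun x y hxy => hadjG _ _ hxy) (hOsub i hi)
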